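/- Let P ⊆ R^n_{≥0} be a convex set of feasible utility vectors and let u* ∈ P maximize the function U ↦ Σ_i ln(U_i) over P, with u*_i > 0 for all i. Then for every d ∈ P, Σ_i d_i / u*_i ≤ n. -/

import Mathlib

/-- `log (1+x) ≥ x/(1+x)`-style bound: for `-t ≤ x`, `0 < t < 1`,
`t*c - t^2*c^2/(1-t) ≤ log (1 + t*c)` when `-1 ≤ c`. -/
lemma log_lower_bound {t c : ℝ} (ht0 : 0 < t) (ht1 : t < 1) (hc : -1 ≤ c) :
    t * c - t ^ 2 * c ^ 2 / (1 - t) ≤ Real.log (1 + t * c) := by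
  set x := t * c with hx
  have h1t : (0:ℝ) < 1 - t := by linarith
  have hx1 : 1 - t ≤ 1 + x := by nlinarith
  have hpx : 0 < 1 + x := by linarith
  have h := Real.log_le_sub_one_of_pos (show (0:ℝ) < (1 + x)⁻¹ by positivity)
  rw [Real.log_inv] at h
  have hlog : 1 - (1 + x)⁻¹ ≤ Real.log (1 + x) := by linarith
  have h2 : 1 - (1 + x)⁻¹ = x / (1 + x) := by field_simp; ring
  have h3 : x - x ^ 2 / (1 - t) ≤ x / (1 + x) := by
    rw [← sub_nonneg]
    have hd : x / (1 + x) - (x - x ^ 2 / (1 - t)) =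
        x ^ 2 * (x + t) / ((1 + x) * (1 - t)) := by field_simp; ring
    rw [hd]
    apply div_nonneg
    · have hxt : 0 ≤ x + t := by nlinarith
      positivity
    · positivity
  have hxx : t ^ 2 * c ^ 2 = x ^ 2 := by rw [hx]; ring
  rw [h2] at hlog
  rw [hxx]
  linarith

/-- First-order optimality of the fractional Max Nash Welfare solution:
if `u*` maximizes `∑ i, log U_i` over a convex set `P` of nonnegative utility
vectors and `u*_i > 0` for all `i`, then `∑ i, d_i / u*_i ≤ n` for all `d ∈ P`. -/
theorem mnw_first_order_optimality
    {n : ℕ} (P : Set (Fin n → ℝ)) (hconv : Convex ℝ P)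
    (hnonneg : ∀ U ∈ P, ∀ i, 0 ≤ U i)
    (ustar : Fin n → ℝ) (hmem : ustar ∈ P) (hpos : ∀ i, 0 < ustar i)
    (hmax : ∀ U ∈ P, ∑ i, Real.log (U i) ≤ ∑ i, Real.log (ustar i)) :
    ∀ d ∈ P, ∑ i, d i / ustar i ≤ (n : ℝ) := by
  intro d hd
  set c : Fin n → ℝ := fun i => d i / ustar i - 1 with hcdef
  have hc1 : ∀ i, -1 ≤ c i := by
    intro i
    have := div_nonneg (hnonneg d hd i) (hpos i).le
    simp only [hcdef]; linarith
  have hsum : ∑ i, d i / ustar i = ∑ i, c i + n := by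
    simp only [hcdef]
    rw [Finset.sum_sub_distrib]
    simp
  rw [hsum]
  suffices hs : ∑ i, c i ≤ 0 by linarith
  by_contra hpos'
  push_neg at hpos'
  set ε := ∑ i, c i with hε
  set K := ∑ i, (c i) ^ 2 with hK
  have hK0 : 0 ≤ K := Finset.sum_nonneg fun i _ => sq_nonneg _
  have key : ∀ t : ℝ, 0 < t → t < 1 → ε ≤ t * K / (1 - t) := by
    intro t ht0 ht1
    have hPt : (fun i => (1 - t) * ustar i + t * d i) ∈ P := by
      have := hconv hmem hd (by linarith : (0:ℝ) ≤ 1 - t) ht0.le (by ring)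
      convert this using 1
      funext i; simp only [Pi.add_apply, Pi.smul_apply, smul_eq_mul]
    have hlog := hmax _ hPt
    have heq : ∀ i, Real.log ((1 - t) * ustar i + t * d i) =
        Real.log (ustar i) + Real.log (1 + t * c i) := by
      intro i
      have hu := hpos i
      have h1 : (1 - t) * ustar i + t * d i = ustar i * (1 + t * c i) := by
        simp only [hcdef]; field_simp; ring
      have h2 : 0 < 1 + t * c i := by nlinarith [hc1 i]
      rw [h1, Real.log_mul hu.ne' h2.ne']
    rw [Finset.sum_congr rfl (fun i _ => heq i), Finset.sum_add_distrib] at hlog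
    have hlog2 : ∑ i, Real.log (1 + t * c i) ≤ 0 := by linarith
    have hlb : ∑ i, (t * c i - t ^ 2 * (c i) ^ 2 / (1 - t)) ≤
        ∑ i, Real.log (1 + t * c i) :=
      Finset.sum_le_sum fun i _ => log_lower_bound ht0 ht1 (hc1 i)
    have hlb2 : t * ε - t ^ 2 * K / (1 - t) ≤ 0 := by
      have : ∑ i, (t * c i - t ^ 2 * (c i) ^ 2 / (1 - t)) =
          t * ε - t ^ 2 * K / (1 - t) := by
        rw [Finset.sum_sub_distrib, ← Finset.mul_sum, hε, hK]
        congr 1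
        rw [← Finset.sum_div, ← Finset.mul_sum]
      linarith
    have h1t : (0:ℝ) < 1 - t := by linarith
    rw [le_div_iff₀ h1t]
    have hcancel : t ^ 2 * K / (1 - t) * (1 - t) = t ^ 2 * K := by field_simp
    have h5 : t * ε * (1 - t) ≤ t ^ 2 * K := by nlinarith [mul_le_mul_of_nonneg_right hlb2 h1t.le]
    nlinarith [h5]
  have hKε : 0 < K + ε := by linarith
  set t := ε / (2 * (K + ε)) with htdef
  have ht0 : 0 < t := by positivity
  have ht2 : t * (K + ε) = ε / 2 := by
    field_simp [htdef]
    rw [htdef]; field_simp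
  have ht1 : t < 1 := by nlinarith
  have := key t ht0 ht1
  rw [le_div_iff₀ (by linarith : (0:ℝ) < 1 - t)] at this
  nlinarith
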